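/- Let p and q be distinct primitive words with |p| = r|q| for some integer r ≥ 2. Then p q^m is primitive for all m ≥ r. -/

import Mathlib

variable {A : Type*}

/-- k-fold concatenation of a word with itself. -/
def pw (w : List A) : ℕ → List A
  | 0 => []
  | n + 1 => w ++ pw w n

/-- A nonempty word is primitive if it is not a proper power. -/
def Primitive (w : List A) : Prop :=
  w ≠ [] ∧ ∀ (v : List A) (m : ℕ), w = pw v m → m = 1

lemma pw_zero (w : List A) : pw w 0 = [] := rfl

lemma pw_succ (w : List A) (n : ℕ) : pw w (n + 1) = w ++ pw w n := rfl

lemma pw_one (w : List A) : pw w 1 = w := by simp [pw]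

lemma pw_two (w : List A) : pw w 2 = w ++ w := by simp [pw]

lemma pw_length (w : List A) : ∀ n, (pw w n).length = n * w.length
  | 0 => by simp [pw]
  | n + 1 => by
    rw [pw_succ, List.length_append, pw_length w n]; ring

lemma pw_add (w : List A) (a b : ℕ) : pw w (a + b) = pw w a ++ pw w b := by
  induction a with
  | zero => simp [pw]
  | succ a ih => rw [Nat.succ_add, pw_succ, pw_succ, ih, List.append_assoc]

lemma pw_succ' (w : List A) (n : ℕ) : pw w (n + 1) = pw w n ++ w := by
  rw [pw_add, pw_one]

lemma pw_mul (q : List A) (s : ℕ) : ∀ k, pw (pw q s) k = pw q (s * k)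
  | 0 => by simp [pw]
  | k + 1 => by
    rw [pw_succ, pw_mul q s k, show s * (k + 1) = s + s * k by ring, pw_add]

lemma pw_shift (x z : List A) : ∀ n, pw (x ++ z) n ++ x = x ++ pw (z ++ x) n
  | 0 => by simp [pw]
  | n + 1 => by
    rw [pw_succ, pw_succ, List.append_assoc, pw_shift x z n]
    simp [List.append_assoc]

lemma pw_inj {x y : List A} {n : ℕ} (hn : n ≠ 0) (hl : x.length = y.length)
    (h : pw x n = pw y n) : x = y := by
  obtain ⟨n', rfl⟩ := Nat.exists_eq_succ_of_ne_zero hn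
  rw [pw_succ, pw_succ] at h
  exact (List.append_inj h hl).1

lemma pw_drop (q : List A) : ∀ (c m : ℕ), c ≤ m →
    (pw q m).drop (c * q.length) = pw q (m - c)
  | 0, m, _ => by simp
  | c + 1, m, h => by
    obtain ⟨m', rfl⟩ := Nat.exists_eq_succ_of_ne_zero (show m ≠ 0 by omega)
    rw [pw_succ, show (c + 1) * q.length = q.length + c * q.length by ring,
      List.drop_length_add_append, pw_drop q c m' (by omega)]
    congr 1
    omega

lemma comm_aux : ∀ (n : ℕ) (x y : List A), x.length + y.length ≤ n → x ++ y = y ++ x →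
    ∃ u i j, x = pw u i ∧ y = pw u j := by
  intro n
  induction n with
  | zero =>
    intro x y hl _
    have hx : x = [] := by
      have := List.length_eq_zero_iff.mp (show x.length = 0 by omega)
      exact this
    have hy : y = [] := List.length_eq_zero_iff.mp (by omega)
    exact ⟨[], 0, 0, by simp [hx, pw], by simp [hy, pw]⟩
  | succ n ih =>
    intro x y hl h
    rcases eq_or_ne x [] with rfl | hx
    · exact ⟨y, 0, 1, rfl, (pw_one y).symm⟩
    rcases eq_or_ne y [] with rfl | hy
    · exact ⟨x, 1, 0, (pw_one x).symm, rfl⟩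
    rcases le_total x.length y.length with hxy | hxy
    · have hyx : y.take x.length = x := by
        have h' := congrArg (List.take x.length) h
        rw [List.take_left, List.take_append_of_le_length hxy] at h'
        exact h'.symm
      have hysplit : y = x ++ y.drop x.length := by
        conv_lhs => rw [← List.take_append_drop x.length y, hyx]
      have h2 : x ++ y.drop x.length = y.drop x.length ++ x := by
        have h' := h
        rw [hysplit, ← List.append_assoc, List.append_assoc, List.append_assoc] at h'
        exact List.append_cancel_left h'
      have hx1 : 1 ≤ x.length := List.length_pos_iff.mpr hx
      have hlen2 : x.length + (y.drop x.length).length ≤ n := by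
        rw [List.length_drop]; omega
      obtain ⟨u, i, j, hxu, hdu⟩ := ih x _ hlen2 h2
      refine ⟨u, i, i + j, hxu, ?_⟩
      rw [pw_add, ← hxu, ← hdu]
      exact hysplit
    · have hyx : x.take y.length = y := by
        have h' := congrArg (List.take y.length) h
        rw [List.take_left, List.take_append_of_le_length hxy] at h'
        exact h'
      have hxsplit : x = y ++ x.drop y.length := by
        conv_lhs => rw [← List.take_append_drop y.length x, hyx]
      have h2 : y ++ x.drop y.length = x.drop y.length ++ y := by
        have h' := h.symm
        rw [hxsplit, ← List.append_assoc, List.append_assoc, List.append_assoc] at h'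
        exact List.append_cancel_left h'
      have hy1 : 1 ≤ y.length := List.length_pos_iff.mpr hy
      have hlen2 : y.length + (x.drop y.length).length ≤ n := by
        rw [List.length_drop]; omega
      obtain ⟨u, i, j, hyu, hdu⟩ := ih y _ hlen2 h2
      refine ⟨u, i + j, i, ?_, hyu⟩
      rw [pw_add, ← hyu, ← hdu]
      exact hxsplit

lemma comm_pw {x y : List A} (h : x ++ y = y ++ x) :
    ∃ u i j, x = pw u i ∧ y = pw u j :=
  comm_aux (x.length + y.length) x y le_rfl h

lemma primitive_no_split {q a z : List A} (hq : Primitive q) (hsplit : q = a ++ z)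
    (ha : a ≠ []) (hz : z ≠ []) (hcomm : a ++ z = z ++ a) : False := by
  obtain ⟨u, i, j, hau, hzu⟩ := comm_pw hcomm
  have hqu : q = pw u (i + j) := by rw [hsplit, hau, hzu, pw_add]
  have h1 := hq.2 u (i + j) hqu
  have hi : i ≠ 0 := by rintro rfl; exact ha hau
  have hj : j ≠ 0 := by rintro rfl; exact hz hzu
  omega

theorem chu_shyr_yu_pq_pow (p q : List A) (hp : Primitive p) (hq : Primitive q)
    (hpq : p ≠ q) (r : ℕ) (hr : 2 ≤ r) (hlen : p.length = r * q.length)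
    (m : ℕ) (hm : r ≤ m) :
    Primitive (p ++ pw q m) := by
  have hL : 1 ≤ q.length := List.length_pos_iff.mpr hq.1
  refine ⟨fun h => hp.1 (List.append_eq_nil_iff.mp h).1, ?_⟩
  intro v k hw
  rcases k with _ | k'
  · rw [pw_zero] at hw
    exact absurd (List.append_eq_nil_iff.mp hw).1 hp.1
  by_contra hk1
  have hk' : 1 ≤ k' := by omega
  have hA : k' * v.length + v.length = r * q.length + m * q.length := by
    have h0 := congrArg List.length hw
    rw [List.length_append, pw_length, pw_length, hlen,
      show (k' + 1) * v.length = k' * v.length + v.length by ring] at h0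
    linarith
  have hrL : 2 ≤ r * q.length := by
    calc 2 ≤ r := hr
    _ = r * 1 := by ring
    _ ≤ r * q.length := Nat.mul_le_mul le_rfl hL
  have hrmL : r * q.length ≤ m * q.length := Nat.mul_le_mul hm le_rfl
  have hV1 : 1 ≤ v.length := by
    by_contra h0
    have hv0 : v.length = 0 := by omega
    rw [hv0] at hA
    simp at hA
    linarith
  have hVk : v.length ≤ k' * v.length := Nat.le_mul_of_pos_left v.length (by omega)
  have hVm : v.length ≤ m * q.length := by linarith
  have hwQ : (p ++ pw q m).drop (r * q.length) = pw q m := List.drop_left' hlen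
  have hdropV : (p ++ pw q m).drop v.length = pw v k' := by
    rw [hw, pw_succ, List.drop_left]
  have htakeK : (p ++ pw q m).take (k' * v.length) = pw v k' := by
    rw [hw, pw_succ']
    exact List.take_left' (pw_length v k')
  have hDT : (p ++ pw q m).drop v.length = (p ++ pw q m).take (k' * v.length) :=
    hdropV.trans htakeK.symm
  obtain ⟨s, t, ht, htlt⟩ : ∃ s t, v.length = s * q.length + t ∧ t < q.length :=
    ⟨v.length / q.length, v.length % q.length, (Nat.div_add_mod' v.length q.length).symm,
      Nat.mod_lt _ (by omega)⟩
  rcases Nat.eq_zero_or_pos t with ht0 | htpos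
  · -- t = 0 : v is an aligned power of q, so p = pw q r, contradiction
    have hsm : s ≤ m := by
      by_contra h0
      push_neg at h0
      have h1 : (m + 1) * q.length ≤ s * q.length := Nat.mul_le_mul h0 le_rfl
      have h2 : (m + 1) * q.length = m * q.length + q.length := by ring
      linarith
    obtain ⟨e, he⟩ := Nat.le.dest hsm
    have hmexp : m * q.length = s * q.length + e * q.length := by rw [← he]; ring
    have hve : k' * v.length = r * q.length + e * q.length := by linarith
    have hvdrop : (p ++ pw q m).drop (k' * v.length) = v := by
      rw [hw, pw_succ']
      exact List.drop_left' (pw_length v k')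
    have hvq : v = pw q s := by
      rw [← hvdrop, hve, ← List.drop_drop, hwQ, pw_drop q e m (by omega)]
      congr 1
      omega
    have hsk : s * (k' + 1) = r + m := by
      have hVs : v.length = s * q.length := by omega
      have h6 : s * (k' + 1) * q.length = (r + m) * q.length := by
        rw [hVs] at hA
        ring_nf
        ring_nf at hA
        linarith
      exact Nat.eq_of_mul_eq_mul_right (by omega) h6
    have hpow : p ++ pw q m = pw q r ++ pw q m := by
      rw [hw, hvq, pw_mul, hsk, pw_add]
    have hpr : p = pw q r := (List.append_inj hpow (by rw [pw_length, hlen])).1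
    have := hp.2 q r hpr
    omega
  · -- t ≥ 1
    have hsm : s < m := by
      by_contra h0
      push_neg at h0
      have : m * q.length ≤ s * q.length := Nat.mul_le_mul h0 le_rfl
      linarith
    obtain ⟨c, hc⟩ := Nat.le.dest htlt.le
    have hcpos : 1 ≤ c := by omega
    by_cases hcase : s + 2 ≤ m
    · -- main case
      obtain ⟨e, he⟩ := Nat.le.dest hcase
      obtain ⟨D, hD⟩ := Nat.le.dest hVm
      have hk'D : k' * v.length = r * q.length + D := by linarith
      have key1 : (pw q m).drop v.length = (pw q m).take D := by
        calc (pw q m).drop v.length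
            = ((p ++ pw q m).drop (r * q.length)).drop v.length := by rw [hwQ]
          _ = (p ++ pw q m).drop (r * q.length + v.length) := List.drop_drop
          _ = ((p ++ pw q m).drop v.length).drop (r * q.length) := by
              rw [List.drop_drop]
              congr 1
              omega
          _ = ((p ++ pw q m).take (k' * v.length)).drop (r * q.length) := by rw [hDT]
          _ = ((p ++ pw q m).drop (r * q.length)).take (k' * v.length - r * q.length) :=
              List.drop_take
          _ = (pw q m).take D := by
              rw [hwQ, hk'D]
              congr 1
              omega
      have hmexp : m * q.length = s * q.length + (e + 1) * q.length + q.length := by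
        rw [← he]; ring
      have hDc : D = (e + 1) * q.length + c := by linarith
      have hLHS : (pw q m).drop v.length = q.drop t ++ pw q (e + 1) := by
        rw [ht, ← List.drop_drop, pw_drop q s m (by omega),
          show m - s = e + 1 + 1 by omega, pw_succ q (e + 1),
          List.drop_append_of_le_length (show t ≤ q.length by omega)]
      have hRHS : (pw q m).take D = pw q (e + 1) ++ q.take c := by
        rw [hDc, show m = (e + 1) + (s + 1) by omega, pw_add, ← pw_length q (e + 1),
          List.take_length_add_append, pw_succ q s,
          List.take_append_of_le_length (show c ≤ q.length by omega)]
      have heqn : q.drop t ++ pw q (e + 1) = pw q (e + 1) ++ q.take c := by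
        rw [← hLHS, ← hRHS]
        exact key1
      have h3 : q.drop t = q.take c := by
        have h3 := congrArg (List.take c) heqn
        rw [List.take_left' (by rw [List.length_drop]; omega)] at h3
        rw [List.take_append_of_le_length
          (by rw [pw_length]
              calc c ≤ q.length := by omega
              _ ≤ (e + 1) * q.length := Nat.le_mul_of_pos_left q.length (by omega))] at h3
        rw [pw_succ q e, List.take_append_of_le_length (show c ≤ q.length by omega)] at h3
        exact h3
      have hsq : q = q.drop t ++ q.drop c := by
        conv_lhs => rw [← List.take_append_drop c q, ← h3]
      obtain ⟨a, ha⟩ : ∃ a, a = q.drop t := ⟨_, rfl⟩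
      obtain ⟨z, hz⟩ : ∃ z, z = q.drop c := ⟨_, rfl⟩
      rw [← ha, ← hz] at hsq
      rw [← h3, ← ha] at heqn
      rw [hsq] at heqn
      rw [pw_shift a z (e + 1)] at heqn
      have hzaaz : a ++ z = z ++ a :=
        pw_inj (by omega)
          (by rw [List.length_append, List.length_append, Nat.add_comm])
          (List.append_cancel_left heqn)
      have haL : a.length = c := by rw [ha, List.length_drop]; omega
      have hzL : z.length = t := by rw [hz, List.length_drop]; omega
      have hane : a ≠ [] := by
        intro h0; rw [h0] at haL; simp at haL; omega
      have hzne : z ≠ [] := by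
        intro h0; rw [h0] at hzL; simp at hzL; omega
      exact primitive_no_split hq hsq hane hzne hzaaz
    · -- boundary case : s + 1 = m
      have hs1 : s + 1 = m := by omega
      have hmexp : m * q.length = s * q.length + q.length := by rw [← hs1]; ring
      have hs1' : 1 ≤ s := by omega
      have hsL : q.length ≤ s * q.length := Nat.le_mul_of_pos_left q.length (by omega)
      have hk3 : k' ≤ 2 := by
        by_contra h3
        push_neg at h3
        have h4 : 3 * v.length ≤ k' * v.length := Nat.mul_le_mul (by omega) le_rfl
        linarith
      have hk12 : k' = 1 ∨ k' = 2 := by omega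
      rcases hk12 with rfl | rfl
      · -- k = 2 : then m = r + 1 and q.length = 2 * t, leading to q = pw u 2
        have h1 : s * q.length + 2 * t = r * q.length + q.length := by linarith
        have hsle : s ≤ r := by
          by_contra hh
          push_neg at hh
          have : r * q.length + q.length ≤ s * q.length := by
            calc r * q.length + q.length = (r + 1) * q.length := by ring
            _ ≤ s * q.length := Nat.mul_le_mul hh le_rfl
          linarith
        have hrle : r ≤ s := by
          by_contra hh
          push_neg at hh
          have : s * q.length + q.length ≤ r * q.length := by
            calc s * q.length + q.length = (s + 1) * q.length := by ring
            _ ≤ r * q.length := Nat.mul_le_mul hh le_rfl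
          linarith
        have hsr : s = r := by omega
        subst hsr
        have h2t : 2 * t = q.length := by linarith
        have hVr : v.length = s * q.length + t := ht
        have hTake : (p ++ pw q m).take v.length = p ++ q.take t := by
          rw [hVr, ← hlen, List.take_length_add_append, show m = s + 1 by omega, pw_succ q s,
            List.take_append_of_le_length (show t ≤ q.length by omega)]
        have hDrop : (p ++ pw q m).drop v.length = q.drop t ++ pw q s := by
          rw [hVr, ← List.drop_drop, hwQ, show m = s + 1 by omega, pw_succ q s,
            List.drop_append_of_le_length (show t ≤ q.length by omega)]
        have hE : p ++ q.take t = q.drop t ++ pw q s := by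
          have hv1 : (p ++ pw q m).take v.length = v := by
            rw [hw, pw_succ, pw_one]
            exact List.take_left' rfl
          have hv2 : (p ++ pw q m).drop v.length = v := by
            rw [hw, pw_succ, pw_one, List.drop_left]
          rw [← hTake, ← hDrop, hv1, hv2]
        obtain ⟨u, hu⟩ : ∃ u, u = q.take t := ⟨_, rfl⟩
        obtain ⟨z, hz⟩ : ∃ z, z = q.drop t := ⟨_, rfl⟩
        have hquz : q = u ++ z := by rw [hu, hz, List.take_append_drop]
        rw [← hu, ← hz] at hE
        have hzshift : z ++ pw q s = pw (z ++ u) s ++ z := by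
          conv_lhs => rw [hquz]
          exact (pw_shift z u s).symm
        have hE2 : p ++ u = pw (z ++ u) s ++ z := hE.trans hzshift
        have hulen : u.length = t := by rw [hu, List.length_take]; omega
        have hzlen : z.length = c := by rw [hz, List.length_drop]; omega
        have hlen2 : p.length = (pw (z ++ u) s).length := by
          rw [pw_length, List.length_append, hulen, hzlen, hlen]
          have hct : c + t = q.length := by omega
          rw [hct]
        obtain ⟨hpzu, huz⟩ := List.append_inj hE2 hlen2
        have hq2 : q = pw u 2 := by
          rw [pw_two, hquz, huz]
        exact absurd (hq.2 u 2 hq2) (by omega)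
      · -- k = 3 : then r = m = 2 and q.length = 3 * t, leading to q = pw γ 3
        have hs2 : s ≤ 1 := by
          by_contra hh
          push_neg at hh
          have : 2 * q.length ≤ s * q.length := Nat.mul_le_mul hh le_rfl
          linarith
        have hseq : s = 1 := by omega
        subst hseq
        have hm2 : m = 2 := by omega
        have hr2 : r = 2 := by omega
        subst hm2
        subst hr2
        have h3t : 3 * t = q.length := by linarith
        have hVt : v.length = q.length + t := by omega
        have hplen2 : p.length = 2 * q.length := hlen
        -- v as the last block of pw v 3
        have hv3 : v = q.drop (2 * t) ++ q := by
          have hx : (p ++ pw q 2).drop (2 * v.length) = v := by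
            rw [hw, pw_succ']
            exact List.drop_left' (pw_length v 2)
          rw [← hx, show 2 * v.length = p.length + 2 * t by omega, List.drop_length_add_append,
            pw_two, List.drop_append_of_le_length (show 2 * t ≤ q.length by omega)]
        obtain ⟨p', hp'⟩ : ∃ p', p' = p.drop v.length := ⟨_, rfl⟩
        have hvv : p' ++ pw q 2 = v ++ v := by
          have hx : (p ++ pw q 2).drop v.length = pw v 2 := by
            rw [hw, pw_succ, List.drop_left]
          rw [hp', ← List.drop_append_of_le_length (show v.length ≤ p.length by omega), hx, pw_two]
        rw [pw_two, hv3] at hvv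
        obtain ⟨γ, hγ⟩ : ∃ γ, γ = q.drop (2 * t) := ⟨_, rfl⟩
        obtain ⟨α, hα⟩ : ∃ α, α = q.take t := ⟨_, rfl⟩
        obtain ⟨δ, hδ⟩ : ∃ δ, δ = q.drop t := ⟨_, rfl⟩
        have hqsplit : q = α ++ δ := by rw [hα, hδ, List.take_append_drop]
        have hγlen : γ.length = t := by rw [hγ, List.length_drop]; omega
        have hαlen : α.length = t := by rw [hα, List.length_take]; omega
        have hδlen : δ.length = 2 * t := by rw [hδ, List.length_drop]; omega
        have hδγ : δ.drop t = γ := by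
          rw [hδ, hγ, List.drop_drop]
          congr 1
          omega
        rw [← hγ] at hvv
        have hE2 : (p' ++ q) ++ q = ((γ ++ q) ++ γ) ++ q := by
          simpa [List.append_assoc] using hvv
        have hE3 : p' ++ q = (γ ++ q) ++ γ := List.append_cancel_right hE2
        rw [hqsplit] at hE3
        have hE4 : p' ++ (α ++ δ) = (γ ++ α) ++ (δ ++ γ) := by
          simpa [List.append_assoc] using hE3
        have hlen3 : p'.length = (γ ++ α).length := by
          rw [hp', List.length_append, List.length_drop, hplen2, hVt, hγlen, hαlen]
          omega
        obtain ⟨_, hqδγ⟩ := List.append_inj hE4 hlen3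
        -- hqδγ : α ++ δ = δ ++ γ
        have hδγγ : δ = γ ++ γ := by
          have h5 := congrArg (List.drop t) hqδγ
          rw [List.drop_left' hαlen,
            List.drop_append_of_le_length (show t ≤ δ.length by omega), hδγ] at h5
          exact h5
        have hαγ : α = γ := by
          have h6 := congrArg (List.take t) hqδγ
          rw [List.take_left' hαlen,
            List.take_append_of_le_length (show t ≤ δ.length by omega), hδγγ,
            List.take_left' hγlen] at h6
          exact h6
        have hq3 : q = pw γ 3 := by
          have hpw3 : pw γ 3 = γ ++ (γ ++ γ) := by simp [pw]
          rw [hpw3, hqsplit, hαγ, hδγγ]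
        exact absurd (hq.2 γ 3 hq3) (by omega)
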